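/- Let u, v, w ∈ Σ⁺ be words over the queue alphabet such that π̄(u) = ε (u is write-only), vw ≡ wv in the queue monoid, and v ≠ w. Then there exist vectors (x_u, x_v, x_w) and (y_u, y_v, y_w) in ℕ³ with x_v + x_w ≠ 0 such that u^{x_u} v^{x_v} u w^{x_w} ≡ u^{y_u} w^{y_w} u v^{y_v} in the queue monoid. -/

import Mathlib

/-- One-step action of a queue symbol (`Sum.inl a` = write `a`, `Sum.inr a` = read `a`)
on a queue state (`none` = error state ⊥). -/
def qstep (A : Type) [DecidableEq A] : Option (List A) → A ⊕ A → Option (List A)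
  | none, _ => none
  | some q, Sum.inl a => some (q ++ [a])
  | some q, Sum.inr a =>
      match q with
      | [] => none
      | b :: q' => if b = a then some q' else none

/-- Action of a word of queue operations on a queue state. -/
def qact (A : Type) [DecidableEq A] (q : Option (List A)) (u : List (A ⊕ A)) :
    Option (List A) :=
  u.foldl (qstep A) q

/-- Equivalence of action sequences: same effect on every queue state. -/
def QEquiv (A : Type) [DecidableEq A] (u v : List (A ⊕ A)) : Prop :=
  ∀ q : Option (List A), qact A q u = qact A q v

/-- The sequence of write actions of a word. -/
def wr {A : Type} (u : List A) : List (A ⊕ A) := u.map Sum.inl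

/-- The sequence of read actions of a word. -/
def rd {A : Type} (u : List A) : List (A ⊕ A) := u.map Sum.inr

/-- Positive projection: erase all read actions. -/
def ppr {A : Type} (u : List (A ⊕ A)) : List A :=
  u.filterMap (Sum.elim some fun _ => none)

/-- Negative projection: erase all write actions (mapping ā to a). -/
def npr {A : Type} (u : List (A ⊕ A)) : List A :=
  u.filterMap (Sum.elim (fun _ => none) some)

/-- `wpow p n` is the `n`-th power `pⁿ` of the word `p`. -/
def wpow {A : Type} (p : List A) (n : ℕ) : List A := (List.replicate n p).flatten

-- basic wpow lemmas
lemma wpow_zero {A : Type} (p : List A) : wpow p 0 = [] := rfl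

lemma wpow_succ {A : Type} (p : List A) (n : ℕ) : wpow p (n+1) = p ++ wpow p n := by
  simp [wpow, List.replicate_succ]

lemma wpow_nil {A : Type} (n : ℕ) : wpow ([] : List A) n = [] := by
  induction n with
  | zero => rfl
  | succ n ih => simp [wpow_succ, ih]

lemma wpow_add {A : Type} (p : List A) (m n : ℕ) :
    wpow p (m + n) = wpow p m ++ wpow p n := by
  unfold wpow; rw [List.replicate_add, List.flatten_append]

lemma length_wpow {A : Type} (p : List A) (n : ℕ) :
    (wpow p n).length = n * p.length := by
  induction n with
  | zero => simp [wpow_zero]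
  | succ n ih => simp [wpow_succ, ih]; ring

lemma comm_single_pow {A : Type} {x y : List A} (h : x ++ y = y ++ x) (n : ℕ) :
    x ++ wpow y n = wpow y n ++ x := by
  induction n with
  | zero => simp [wpow_zero]
  | succ n ih => rw [wpow_succ, ← List.append_assoc, h, List.append_assoc, ih,
      ← List.append_assoc]

lemma comm_pow {A : Type} {x y : List A} (h : x ++ y = y ++ x) (m n : ℕ) :
    wpow x m ++ wpow y n = wpow y n ++ wpow x m := by
  induction m with
  | zero => simp [wpow_zero]
  | succ m ih => rw [wpow_succ, List.append_assoc, ih, ← List.append_assoc,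
      comm_single_pow h, List.append_assoc]

lemma wpow_append_of_comm {A : Type} {x y : List A} (h : x ++ y = y ++ x) (n : ℕ) :
    wpow (x ++ y) n = wpow x n ++ wpow y n := by
  induction n with
  | zero => simp [wpow_zero]
  | succ n ih =>
    rw [wpow_succ, ih, wpow_succ, wpow_succ]
    calc (x ++ y) ++ (wpow x n ++ wpow y n)
        = x ++ ((y ++ wpow x n) ++ wpow y n) := by simp [List.append_assoc]
      _ = x ++ ((wpow x n ++ y) ++ wpow y n) := by rw [comm_single_pow h.symm]
      _ = (x ++ wpow x n) ++ (y ++ wpow y n) := by simp [List.append_assoc]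

lemma key_pow {A : Type} : ∀ (n : ℕ) (x y : List A), x.length + y.length ≤ n →
    x ++ y = y ++ x → wpow x y.length = wpow y x.length := by
  intro n
  induction n using Nat.strong_induction_on with
  | _ n IH =>
    intro x y hn hc
    rcases eq_or_ne x [] with rfl | hx
    · simp [wpow_nil, wpow_zero]
    rcases eq_or_ne y [] with rfl | hy
    · simp [wpow_nil, wpow_zero]
    have hxpos : 0 < x.length := List.length_pos_iff.mpr hx
    have hypos : 0 < y.length := List.length_pos_iff.mpr hy
    rcases le_or_gt x.length y.length with hle | hlt
    · -- x is a prefix of y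
      have hxy : x = y.take x.length := by
        conv_lhs => rw [← (List.take_left : List.take x.length (x ++ y) = x)]
        rw [hc, List.take_append_of_le_length hle]
      obtain ⟨c, rfl⟩ : ∃ c, y = x ++ c :=
        ⟨y.drop x.length, by conv_lhs => rw [← List.take_append_drop x.length y, ← hxy]⟩
      have hcc : x ++ c = c ++ x := by
        apply List.append_cancel_left (as := x)
        rw [hc, List.append_assoc]
      have hm : x.length + c.length < n := by
        have := (List.length_append : (x ++ c).length = x.length + c.length)
        omega
      have hrec := IH (x.length + c.length) hm x c le_rfl hcc
      rw [List.length_append, wpow_add, wpow_append_of_comm hcc, hrec]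
    · -- y is a prefix of x
      have hxy : y = x.take y.length := by
        conv_lhs => rw [← (List.take_left : List.take y.length (y ++ x) = y)]
        rw [← hc, List.take_append_of_le_length hlt.le]
      obtain ⟨c, rfl⟩ : ∃ c, x = y ++ c :=
        ⟨x.drop y.length, by conv_lhs => rw [← List.take_append_drop y.length x, ← hxy]⟩
      have hcc : y ++ c = c ++ y := by
        apply List.append_cancel_left (as := y)
        rw [← hc, List.append_assoc]
      have hm : y.length + c.length < n := by
        have := (List.length_append : (y ++ c).length = y.length + c.length)
        omega
      have hrec := IH (y.length + c.length) hm y c le_rfl hcc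
      rw [List.length_append, wpow_add, wpow_append_of_comm hcc, hrec]

-- projections
lemma npr_append {A : Type} (x y : List (A ⊕ A)) : npr (x ++ y) = npr x ++ npr y :=
  List.filterMap_append

lemma ppr_append {A : Type} (x y : List (A ⊕ A)) : ppr (x ++ y) = ppr x ++ ppr y :=
  List.filterMap_append

lemma npr_wpow {A : Type} (x : List (A ⊕ A)) (n : ℕ) : npr (wpow x n) = wpow (npr x) n := by
  induction n with
  | zero => rfl
  | succ n ih => rw [wpow_succ, npr_append, ih, wpow_succ]

lemma ppr_wpow {A : Type} (x : List (A ⊕ A)) (n : ℕ) : ppr (wpow x n) = wpow (ppr x) n := by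
  induction n with
  | zero => rfl
  | succ n ih => rw [wpow_succ, ppr_append, ih, wpow_succ]

-- qact lemmas
lemma qact_append (A : Type) [DecidableEq A] (q : Option (List A)) (s t : List (A ⊕ A)) :
    qact A q (s ++ t) = qact A (qact A q s) t :=
  List.foldl_append ..

lemma qact_none (A : Type) [DecidableEq A] (s : List (A ⊕ A)) : qact A none s = none := by
  induction s with
  | nil => rfl
  | cons x s ih => simpa [qact, qstep] using ih

lemma qact_write (A : Type) [DecidableEq A] : ∀ (s : List (A ⊕ A)) (q : List A),
    npr s = [] → qact A (some q) s = some (q ++ ppr s) := by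
  intro s
  induction s with
  | nil => intro q _; simp [qact, ppr]
  | cons x s ih =>
    intro q h
    match x with
    | Sum.inr b => simp [npr, List.filterMap_cons] at h
    | Sum.inl a =>
      have h' : npr s = [] := by simpa [npr, List.filterMap_cons] using h
      show qact A (qstep A (some q) (Sum.inl a)) s = _
      rw [show qstep A (some q) (Sum.inl a) = some (q ++ [a]) from rfl, ih _ h']
      simp [ppr, List.filterMap_cons]

lemma qact_long (A : Type) [DecidableEq A] : ∀ (s : List (A ⊕ A)) (q : List A),
    (npr s).length ≤ q.length →
    qact A (some q) s =
      if npr s <+: q then some (q.drop (npr s).length ++ ppr s) else none := by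
  intro s
  induction s with
  | nil => intro q _; simp [qact, npr, ppr]
  | cons x s ih =>
    intro q hlen
    match x with
    | Sum.inl a =>
      have hn : npr (Sum.inl a :: s) = npr s := by simp [npr, List.filterMap_cons]
      have hp : ppr (Sum.inl a :: s) = a :: ppr s := by simp [ppr, List.filterMap_cons]
      rw [hn] at hlen ⊢
      rw [hp]
      show qact A (some (q ++ [a])) s = _
      rw [ih (q ++ [a]) (by simp; omega)]
      have hiff : (npr s <+: q ++ [a]) ↔ (npr s <+: q) := by
        rw [List.prefix_iff_eq_take, List.prefix_iff_eq_take,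
          List.take_append_of_le_length hlen]
      by_cases hpre : npr s <+: q
      · rw [if_pos (hiff.mpr hpre), if_pos hpre,
          List.drop_append_of_le_length hlen]
        simp
      · rw [if_neg (fun h => hpre (hiff.mp h)), if_neg hpre]
    | Sum.inr b =>
      have hn : npr (Sum.inr b :: s) = b :: npr s := by simp [npr, List.filterMap_cons]
      have hp : ppr (Sum.inr b :: s) = ppr s := by simp [ppr, List.filterMap_cons]
      rw [hn] at hlen ⊢
      rw [hp]
      match q with
      | [] => simp at hlen
      | c :: q' =>
        show qact A (if c = b then some q' else none) s = _
        by_cases hcb : c = b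
        · subst hcb
          rw [if_pos rfl, ih q' (by simpa using hlen)]
          by_cases hpre : npr s <+: q'
          · rw [if_pos hpre, if_pos (List.cons_prefix_cons.mpr ⟨rfl, hpre⟩)]
            simp
          · rw [if_neg hpre, if_neg (fun h => hpre (List.cons_prefix_cons.mp h).2)]
        · rw [if_neg hcb, qact_none]
          rw [if_neg (fun h => hcb ((List.cons_prefix_cons.mp h).1).symm)]

lemma pr_nil {A : Type} : ∀ (s : List (A ⊕ A)), ppr s = [] → npr s = [] → s = [] := by
  intro s
  match s with
  | [] => intro _ _; rfl
  | Sum.inl a :: s => intro h _; simp [ppr, List.filterMap_cons] at h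
  | Sum.inr b :: s => intro _ h; simp [npr, List.filterMap_cons] at h


/-- For a write-only word `u` and commuting words `v ≠ w`, there is a nontrivial
relation `u^{x_u} v^{x_v} u w^{x_w} ≡ u^{y_u} w^{y_w} u v^{y_v}`. -/
theorem stmt11 (A : Type) [DecidableEq A] (u v w : List (A ⊕ A))
    (hu : u ≠ []) (hv : v ≠ []) (hw : w ≠ [])
    (hwr : npr u = [])
    (hcomm : QEquiv A (v ++ w) (w ++ v)) (hne : v ≠ w) :
    ∃ xu xv xw yu yv yw : ℕ, xv + xw ≠ 0 ∧
      QEquiv A (wpow u xu ++ wpow v xv ++ u ++ wpow w xw)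
        (wpow u yu ++ wpow w yw ++ u ++ wpow v yv) := by
  -- Step 1: from hcomm, the two projections commute as free words.
  have e1 : qact A (some (npr v ++ npr w)) (v ++ w) = some (ppr v ++ ppr w) := by
    rw [qact_long A (v ++ w) _ (by rw [npr_append])]
    rw [npr_append, if_pos List.prefix_rfl, List.drop_length, ppr_append]
    rfl
  have e2 := (hcomm (some (npr v ++ npr w))).symm
  rw [e1, qact_long A (w ++ v) _
    (by simp only [npr_append, List.length_append]; omega)] at e2
  have hr : npr w ++ npr v = npr v ++ npr w := by
    by_cases hpre : npr (w ++ v) <+: npr v ++ npr w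
    · have := hpre.eq_of_length (by simp only [npr_append, List.length_append]; omega)
      rwa [npr_append] at this
    · rw [if_neg hpre] at e2; exact absurd e2 (by simp)
  have hp : ppr v ++ ppr w = ppr w ++ ppr v := by
    rw [if_pos (by rw [npr_append, hr])] at e2
    have hd : (npr (w ++ v)).length = (npr v ++ npr w).length := by
      simp only [npr_append, List.length_append]; omega
    rw [hd, List.drop_length, ppr_append, List.nil_append] at e2
    exact (Option.some.inj e2).symm
  -- Step 2: common power of the write projections.
  obtain ⟨a, b, hab, hX⟩ : ∃ a b, a + b ≠ 0 ∧ wpow (ppr v) a = wpow (ppr w) b := by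
    rcases eq_or_ne (ppr v) [] with h | h
    · exact ⟨1, 0, by omega, by rw [h, wpow_nil, wpow_zero]⟩
    rcases eq_or_ne (ppr w) [] with h' | h'
    · exact ⟨0, 1, by omega, by rw [h', wpow_nil, wpow_zero]⟩
    · refine ⟨(ppr w).length, (ppr v).length, ?_, key_pow _ _ _ le_rfl hp⟩
      have h1 := List.length_pos_iff.mpr h
      have h2 := List.length_pos_iff.mpr h'
      omega
  -- Step 3: assemble.
  set N := (wpow (npr v) a).length + (wpow (npr w) b).length with hN
  refine ⟨N, a, b, N, a, b, hab, ?_⟩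
  intro q
  cases q with
  | none => rw [qact_none, qact_none]
  | some q =>
    have hPpos : 0 < (ppr u).length :=
      List.length_pos_iff.mpr (fun hh => hu (pr_nil u hh hwr))
    have assoc1 : wpow u N ++ wpow v a ++ u ++ wpow w b
        = wpow u N ++ (wpow v a ++ (u ++ wpow w b)) := by
      simp [List.append_assoc]
    have assoc2 : wpow u N ++ wpow w b ++ u ++ wpow v a
        = wpow u N ++ (wpow w b ++ (u ++ wpow v a)) := by
      simp [List.append_assoc]
    have hnu : npr (wpow u N) = [] := by rw [npr_wpow, hwr, wpow_nil]
    set Q := q ++ wpow (ppr u) N with hQ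
    have hlenQ : N ≤ Q.length := by
      rw [hQ, List.length_append, length_wpow]
      have : N ≤ N * (ppr u).length := Nat.le_mul_of_pos_right _ hPpos
      omega
    have hn1 : npr (wpow v a ++ (u ++ wpow w b))
        = wpow (npr v) a ++ wpow (npr w) b := by
      rw [npr_append, npr_append, npr_wpow, npr_wpow, hwr]
      rfl
    have hn2 : npr (wpow w b ++ (u ++ wpow v a))
        = wpow (npr w) b ++ wpow (npr v) a := by
      rw [npr_append, npr_append, npr_wpow, npr_wpow, hwr]
      rfl
    have hp1 : ppr (wpow v a ++ (u ++ wpow w b))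
        = wpow (ppr v) a ++ (ppr u ++ wpow (ppr w) b) := by
      rw [ppr_append, ppr_append, ppr_wpow, ppr_wpow]
    have hp2 : ppr (wpow w b ++ (u ++ wpow v a))
        = wpow (ppr w) b ++ (ppr u ++ wpow (ppr v) a) := by
      rw [ppr_append, ppr_append, ppr_wpow, ppr_wpow]
    have hlen2 : (wpow (npr w) b ++ wpow (npr v) a).length = N := by
      rw [List.length_append]; omega
    have calc1 : qact A (some q) (wpow u N ++ (wpow v a ++ (u ++ wpow w b)))
        = if wpow (npr v) a ++ wpow (npr w) b <+: Q then
            some (Q.drop (wpow (npr v) a ++ wpow (npr w) b).length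
              ++ (wpow (ppr v) a ++ (ppr u ++ wpow (ppr w) b))) else none := by
      rw [qact_append, qact_write A _ q hnu, ppr_wpow,
        qact_long A (wpow v a ++ (u ++ wpow w b)) Q
          (by rw [hn1, List.length_append]; omega),
        hn1, hp1]
    have calc2 : qact A (some q) (wpow u N ++ (wpow w b ++ (u ++ wpow v a)))
        = if wpow (npr w) b ++ wpow (npr v) a <+: Q then
            some (Q.drop (wpow (npr w) b ++ wpow (npr v) a).length
              ++ (wpow (ppr w) b ++ (ppr u ++ wpow (ppr v) a))) else none := by
      rw [qact_append, qact_write A _ q hnu, ppr_wpow,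
        qact_long A (wpow w b ++ (u ++ wpow v a)) Q
          (by rw [hn2, hlen2]; exact hlenQ),
        hn2, hp2]
    have hC : wpow (npr w) b ++ wpow (npr v) a
        = wpow (npr v) a ++ wpow (npr w) b := comm_pow hr b a
    have hD : wpow (ppr w) b ++ (ppr u ++ wpow (ppr v) a)
        = wpow (ppr v) a ++ (ppr u ++ wpow (ppr w) b) := by rw [hX]
    rw [assoc1, assoc2, calc1, calc2, hC, hD]
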